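/- Let H be a bipartite graph with a perfect matching f from keywords to bidders, arrival order π, and ranking σ. If a bidder v = f(u) is not matched by Ranking(H, π, σ), then the keyword u is matched by Ranking to some bidder whose rank in σ is strictly less than σ(v). -/

import Mathlib

noncomputable def greedyMatchedUpTo (m : ℕ) {R : Type*} [Fintype R] [DecidableEq R]
    (A : Fin m → R → Prop) [∀ t v, Decidable (A t v)] (rk : R → ℕ) : ℕ → Finset R
  | 0 => ∅
  | t + 1 =>
    let M := greedyMatchedUpTo m A rk t
    if h : t < m then
      let avail := Finset.univ.filter fun v => A ⟨t, h⟩ v ∧ v ∉ M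
      if hne : avail.Nonempty then
        insert (Function.argminOn rk ↑avail (Finset.coe_nonempty.mpr hne)) M
      else M
    else M

noncomputable def greedyAssign (m : ℕ) {R : Type*} [Fintype R] [DecidableEq R]
    (A : Fin m → R → Prop) [∀ t v, Decidable (A t v)] (rk : R → ℕ) (u : Fin m) :
    Option R :=
  let M := greedyMatchedUpTo m A rk u.val
  let avail := Finset.univ.filter fun v => A u v ∧ v ∉ M
  if hne : avail.Nonempty then
    some (Function.argminOn rk ↑avail (Finset.coe_nonempty.mpr hne))
  else none

lemma greedy_mono (m : ℕ) {R : Type*} [Fintype R] [DecidableEq R]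
    (A : Fin m → R → Prop) [∀ t v, Decidable (A t v)] (rk : R → ℕ) :
    Monotone (greedyMatchedUpTo m A rk) := by
  apply monotone_nat_of_le_succ
  intro t
  rw [greedyMatchedUpTo]
  dsimp only
  split_ifs with h hne
  · exact Finset.subset_insert _ _
  · exact le_rfl
  · exact le_rfl

/-- if `f` is a perfect matching of `H` (keywords `Fin m`, bidders `V`,
ranking given by the injective rank function `rk`) and the bidder `v = f u` is left
unmatched by Ranking, then Ranking matches the keyword `u` to a bidder of strictly
smaller rank than `v`. -/
theorem stmt10 (m : ℕ) {V : Type*} [Fintype V] [DecidableEq V]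
    (A : Fin m → V → Prop) [∀ t v, Decidable (A t v)]
    (rk : V → ℕ) (hrk : Function.Injective rk)
    (f : Fin m → V) (hbij : Function.Bijective f) (hadj : ∀ u, A u (f u))
    (u : Fin m) (hunmatched : f u ∉ greedyMatchedUpTo m A rk m) :
    ∃ v' : V, greedyAssign m A rk u = some v' ∧ rk v' < rk (f u) := by
  have hmono := greedy_mono m A rk
  have ht : u.val < m := u.isLt
  have hfu_t : f u ∉ greedyMatchedUpTo m A rk u.val := fun h =>
    hunmatched (hmono (le_of_lt ht) h)
  set M := greedyMatchedUpTo m A rk u.val with hM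
  set avail := Finset.univ.filter fun v => A u v ∧ v ∉ M with havail
  have hmem : f u ∈ avail := by
    simp [havail, hadj u, hfu_t]
  have hne : avail.Nonempty := ⟨_, hmem⟩
  set w := Function.argminOn rk ↑avail (Finset.coe_nonempty.mpr hne) with hw
  have hassign : greedyAssign m A rk u = some w := by
    rw [greedyAssign]
    simp only [← hM, ← havail]
    rw [dif_pos hne]
  refine ⟨w, hassign, ?_⟩
  have hle : rk w ≤ rk (f u) :=
    Function.argminOn_le rk _ hmem
  have hw_next : w ∈ greedyMatchedUpTo m A rk (u.val + 1) := by
    rw [greedyMatchedUpTo]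
    dsimp only
    rw [dif_pos ht]
    split_ifs with h'
    · exact Finset.mem_insert_self _ _
    · exact absurd hne h'
  have hne' : w ≠ f u := by
    intro h
    exact hunmatched (h ▸ hmono (Nat.succ_le_of_lt ht) hw_next)
  exact lt_of_le_of_ne hle (fun h => hne' (hrk h))
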